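/- Assume φ ∈ F is nonzero and ρ ∈ ℤⁿ is nonzero. Then the vertical-type derivation D_{e,ρ,φ} and the simple horizontal-type derivation E_{ẽ,s,d,u} commute on B (i.e. D_{e,ρ,φ}∘E_{ẽ,s,d,u} = E_{ẽ,s,d,u}∘D_{e,ρ,φ}) if and only if ⟨ẽ,ρ⟩ = 0 and t·φ′ + v₀(e)·φ = 0 in F, where v₀(e) = ⟨e,u⟩/d; the second condition is equivalent to saying that v₀(e) is an integer and φ = c·t^{−v₀(e)} for some c ∈ K∖{0}. -/

import Mathlib

/- STATEMENT 6: for `φ ≠ 0` and `ρ ≠ 0`, the vertical-type derivation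
`D_{e,ρ,φ}` and the simple horizontal-type derivation `E_{e',s,d,u}` commute
on `B` iff `⟨e',ρ⟩ = 0` and `t·φ′ + v₀(e)·φ = 0`, where `v₀(e) = ⟨e,u⟩/d`;
moreover the second condition is equivalent to: `v₀(e)` is an integer and
`φ = c·t^{−v₀(e)}` for some `c ∈ K∖{0}`. -/

noncomputable section

/-- standard pairing `⟨m,v⟩ = Σᵢ mᵢ vᵢ` on `ℤⁿ`. -/
def pairZ {n : ℕ} (m v : Fin n → ℤ) : ℤ := ∑ i, m i * v i

/-- derivative `f ↦ df/dt` of a rational function `f ∈ K(t)`. -/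
def rderiv {K : Type*} [Field K] (φ : RatFunc K) : RatFunc K :=
  (algebraMap (Polynomial K) (RatFunc K) (Polynomial.derivative φ.num)
      * algebraMap (Polynomial K) (RatFunc K) φ.denom
    - algebraMap (Polynomial K) (RatFunc K) φ.num
      * algebraMap (Polynomial K) (RatFunc K) (Polynomial.derivative φ.denom))
    / (algebraMap (Polynomial K) (RatFunc K) φ.denom) ^ 2

/-- Vertical-type derivation `D_{e,ρ,φ}` on the group algebra `B = K(t)[ℤⁿ]`,
determined by `f·χ^m ↦ ⟨m,ρ⟩·φ·f·χ^{m+e}`. -/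
def Dvert {K : Type*} [Field K] {n : ℕ} (e ρ : Fin n → ℤ) (φ : RatFunc K)
    (b : (Fin n → ℤ) →₀ RatFunc K) : (Fin n → ℤ) →₀ RatFunc K :=
  b.sum fun m f => Finsupp.single (m + e) ((pairZ m ρ : RatFunc K) * φ * f)

/-- Simple horizontal-type derivation `E_{e',s,d,u}` on `B = K(t)[ℤⁿ]`,
determined by `f·χ^m ↦ t^s·(⟨m,u⟩·f + d·t·f′)·χ^{m+e'}`. -/
def Ehor {K : Type*} [Field K] {n : ℕ} (e' : Fin n → ℤ) (s : ℤ) (d : ℤ)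
    (u : Fin n → ℤ) (b : (Fin n → ℤ) →₀ RatFunc K) : (Fin n → ℤ) →₀ RatFunc K :=
  b.sum fun m f => Finsupp.single (m + e')
    ((RatFunc.X : RatFunc K) ^ s
      * ((pairZ m u : RatFunc K) * f + (d : RatFunc K) * RatFunc.X * rderiv f))

section AuxLemmas
open Polynomial
variable {K : Type*} [Field K]

lemma rderiv_div (p q : K[X]) (hq : q ≠ 0) :
    rderiv (algebraMap K[X] (RatFunc K) p / algebraMap K[X] (RatFunc K) q)
      = (algebraMap K[X] (RatFunc K) (derivative p) * algebraMap K[X] (RatFunc K) q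
          - algebraMap K[X] (RatFunc K) p * algebraMap K[X] (RatFunc K) (derivative q))
        / (algebraMap K[X] (RatFunc K) q) ^ 2 := by
  set x := algebraMap K[X] (RatFunc K) p / algebraMap K[X] (RatFunc K) q with hx
  set c := x.num; set e := x.denom
  have he : e ≠ 0 := x.denom_ne_zero
  have hq' : algebraMap K[X] (RatFunc K) q ≠ 0 := RatFunc.algebraMap_ne_zero hq
  have he' : algebraMap K[X] (RatFunc K) e ≠ 0 := RatFunc.algebraMap_ne_zero he
  have cross : c * q = p * e := by
    have h2 : algebraMap K[X] (RatFunc K) c / algebraMap K[X] (RatFunc K) e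
        = algebraMap K[X] (RatFunc K) p / algebraMap K[X] (RatFunc K) q := by
      rw [RatFunc.num_div_denom]
    rw [div_eq_div_iff he' hq', ← map_mul, ← map_mul] at h2
    exact RatFunc.algebraMap_injective K h2
  have dcross : derivative c * q + c * derivative q
      = derivative p * e + p * derivative e := by
    have := congrArg derivative cross
    simpa [derivative_mul] using this
  have key : (derivative c * e - c * derivative e) * q ^ 2
      = (derivative p * q - p * derivative q) * e ^ 2 := by
    linear_combination (e * q) * dcross - (derivative e * q + derivative q * e) * cross
  rw [rderiv]
  rw [div_eq_div_iff (pow_ne_zero 2 he') (pow_ne_zero 2 hq')]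
  have := congrArg (algebraMap K[X] (RatFunc K)) key
  simpa [map_mul, map_sub, map_pow] using this

lemma rderiv_algebraMap (p : K[X]) :
    rderiv (algebraMap K[X] (RatFunc K) p) = algebraMap K[X] (RatFunc K) (derivative p) := by
  have := rderiv_div (K := K) p 1 one_ne_zero
  simpa using this

lemma rderiv_zero : rderiv (0 : RatFunc K) = 0 := by
  simpa using rderiv_algebraMap (0 : K[X])

lemma rderiv_one : rderiv (1 : RatFunc K) = 0 := by
  simpa using rderiv_algebraMap (1 : K[X])

lemma rderiv_intCast (z : ℤ) : rderiv ((z : RatFunc K)) = 0 := by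
  have := rderiv_algebraMap ((z : ℤ) : K[X])
  simpa using this

lemma rderiv_C (c : K) : rderiv (RatFunc.C c) = 0 := by
  have := rderiv_algebraMap (Polynomial.C c)
  simpa [RatFunc.algebraMap_C] using this

lemma rderiv_add (f g : RatFunc K) : rderiv (f + g) = rderiv f + rderiv g := by
  obtain ⟨a, b, hb, rfl⟩ : ∃ a b : K[X], b ≠ 0 ∧
      f = algebraMap K[X] (RatFunc K) a / algebraMap K[X] (RatFunc K) b :=
    ⟨f.num, f.denom, f.denom_ne_zero, (RatFunc.num_div_denom f).symm⟩
  obtain ⟨c, e, he, rfl⟩ : ∃ c e : K[X], e ≠ 0 ∧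
      g = algebraMap K[X] (RatFunc K) c / algebraMap K[X] (RatFunc K) e :=
    ⟨g.num, g.denom, g.denom_ne_zero, (RatFunc.num_div_denom g).symm⟩
  have hb' : algebraMap K[X] (RatFunc K) b ≠ 0 := RatFunc.algebraMap_ne_zero hb
  have he' : algebraMap K[X] (RatFunc K) e ≠ 0 := RatFunc.algebraMap_ne_zero he
  have hsum : algebraMap K[X] (RatFunc K) a / algebraMap K[X] (RatFunc K) b
      + algebraMap K[X] (RatFunc K) c / algebraMap K[X] (RatFunc K) e
      = algebraMap K[X] (RatFunc K) (a * e + c * b) / algebraMap K[X] (RatFunc K) (b * e) := by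
    push_cast [map_add, map_mul]
    field_simp
  rw [hsum, rderiv_div _ _ (mul_ne_zero hb he), rderiv_div _ _ hb, rderiv_div _ _ he]
  simp only [derivative_add, derivative_mul, map_add, map_mul]
  field_simp
  ring

lemma rderiv_mul (f g : RatFunc K) : rderiv (f * g) = rderiv f * g + f * rderiv g := by
  obtain ⟨a, b, hb, rfl⟩ : ∃ a b : K[X], b ≠ 0 ∧
      f = algebraMap K[X] (RatFunc K) a / algebraMap K[X] (RatFunc K) b :=
    ⟨f.num, f.denom, f.denom_ne_zero, (RatFunc.num_div_denom f).symm⟩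
  obtain ⟨c, e, he, rfl⟩ : ∃ c e : K[X], e ≠ 0 ∧
      g = algebraMap K[X] (RatFunc K) c / algebraMap K[X] (RatFunc K) e :=
    ⟨g.num, g.denom, g.denom_ne_zero, (RatFunc.num_div_denom g).symm⟩
  have hb' : algebraMap K[X] (RatFunc K) b ≠ 0 := RatFunc.algebraMap_ne_zero hb
  have he' : algebraMap K[X] (RatFunc K) e ≠ 0 := RatFunc.algebraMap_ne_zero he
  have hprod : algebraMap K[X] (RatFunc K) a / algebraMap K[X] (RatFunc K) b
      * (algebraMap K[X] (RatFunc K) c / algebraMap K[X] (RatFunc K) e)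
      = algebraMap K[X] (RatFunc K) (a * c) / algebraMap K[X] (RatFunc K) (b * e) := by
    push_cast [map_mul]
    field_simp
  rw [hprod, rderiv_div _ _ (mul_ne_zero hb he), rderiv_div _ _ hb, rderiv_div _ _ he]
  simp only [derivative_mul, map_add, map_mul]
  field_simp
  ring

lemma X_mul_rderiv_zpow (z : ℤ) :
    RatFunc.X * rderiv ((RatFunc.X : RatFunc K) ^ z) = (z : RatFunc K) * (RatFunc.X : RatFunc K) ^ z := by
  have hX : (RatFunc.X : RatFunc K) ≠ 0 := RatFunc.X_ne_zero
  have hXp : (Polynomial.X : K[X]) ≠ 0 := Polynomial.X_ne_zero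
  have hnat : ∀ m : ℕ, RatFunc.X * rderiv ((RatFunc.X : RatFunc K) ^ m)
      = (m : RatFunc K) * (RatFunc.X : RatFunc K) ^ m := by
    intro m
    have : ((RatFunc.X : RatFunc K) ^ m) = algebraMap K[X] (RatFunc K) (Polynomial.X ^ m) := by
      simp [map_pow, RatFunc.algebraMap_X]
    rw [this, rderiv_algebraMap, derivative_X_pow]
    cases m with
    | zero => simp
    | succ m =>
      simp only [map_mul, map_pow, map_natCast, RatFunc.algebraMap_X, Nat.add_sub_cancel]
      push_cast
      ring
  obtain ⟨m, rfl | rfl⟩ := z.eq_nat_or_neg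
  · rw [zpow_natCast]; simpa using hnat m
  · rw [zpow_neg, zpow_natCast]
    have hrepr : ((RatFunc.X : RatFunc K) ^ m)⁻¹
        = algebraMap K[X] (RatFunc K) 1 / algebraMap K[X] (RatFunc K) (Polynomial.X ^ m) := by
      simp [map_pow, RatFunc.algebraMap_X]
    rw [hrepr, rderiv_div _ _ (pow_ne_zero _ hXp)]
    simp only [derivative_one, derivative_X_pow, map_pow, map_mul, map_one,
      RatFunc.algebraMap_X, Polynomial.C_eq_natCast, map_natCast, zero_mul, one_mul, zero_sub]
    cases m with
    | zero => simp
    | succ m =>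
      have h1 : ((RatFunc.X : RatFunc K)) ^ (m + 1) ≠ 0 := pow_ne_zero _ hX
      field_simp
      push_cast
      ring

instance ratFuncCharZero [CharZero K] : CharZero (RatFunc K) :=
  charZero_of_injective_algebraMap (RatFunc.algebraMap_injective K)

lemma monomial_of_dvd [CharZero K] (p : K[X]) (hp : p ≠ 0)
    (h : p ∣ Polynomial.X * derivative p) :
    ∃ (c : K) (j : ℕ), c ≠ 0 ∧ p = Polynomial.C c * Polynomial.X ^ j := by
  obtain ⟨g, hg⟩ := h
  -- g is a constant
  have hgC : ∃ c0 : K, g = Polynomial.C c0 := by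
    by_cases h0 : Polynomial.X * derivative p = 0
    · refine ⟨0, ?_⟩
      have : p * g = 0 := by rw [← hg, h0]
      rcases mul_eq_zero.1 this with h | h
      · exact absurd h hp
      · simp [h]
    · have hd0 : derivative p ≠ 0 := by
        intro hc; apply h0; rw [hc, mul_zero]
      have hdegp : p.natDegree ≠ 0 := by
        intro hc
        exact hd0 (by
          have := Polynomial.natDegree_eq_zero.mp hc
          obtain ⟨c, rfl⟩ := this
          simp)
      have hle : (Polynomial.X * derivative p).natDegree ≤ p.natDegree := by
        rw [Polynomial.natDegree_mul Polynomial.X_ne_zero hd0, Polynomial.natDegree_X]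
        have := Polynomial.natDegree_derivative_lt hdegp
        omega
      have hg0 : g ≠ 0 := by
        intro hc; apply h0; rw [hg, hc, mul_zero]
      have : p.natDegree + g.natDegree ≤ p.natDegree := by
        rw [← Polynomial.natDegree_mul hp hg0, ← hg]; exact hle
      have hgdeg : g.natDegree = 0 := by omega
      obtain ⟨c, hc⟩ := Polynomial.natDegree_eq_zero.mp hgdeg
      exact ⟨c, hc.symm⟩
  obtain ⟨c0, rfl⟩ := hgC
  have coeffEq : ∀ i : ℕ, (i : K) * p.coeff i = c0 * p.coeff i := by
    intro i
    have := congrArg (fun q => Polynomial.coeff q i) hg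
    cases i with
    | zero =>
      simp at this ⊢
      tauto
    | succ n =>
      rw [Polynomial.coeff_X_mul, Polynomial.coeff_derivative, Polynomial.coeff_mul_C] at this
      push_cast
      linear_combination this
  set j := p.natDegree with hj
  have hcj : p.coeff j ≠ 0 := Polynomial.leadingCoeff_ne_zero.mpr hp
  have hc0 : c0 = (j : K) := by
    have := coeffEq j
    field_simp at this
    exact this.symm
  refine ⟨p.coeff j, j, hcj, ?_⟩
  ext i
  rw [Polynomial.coeff_C_mul, Polynomial.coeff_X_pow]
  by_cases hij : i = j
  · simp [hij]
  · simp only [hij, if_false, mul_zero]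
    by_contra hne
    have := coeffEq i
    rw [hc0] at this
    have : (i : K) = (j : K) := by
      field_simp at this
      exact this
    exact hij (Nat.cast_injective this)

lemma X_mul_rderiv_CX (c : K) (z : ℤ) :
    RatFunc.X * rderiv (RatFunc.C c * (RatFunc.X : RatFunc K) ^ z)
      = (z : RatFunc K) * (RatFunc.C c * (RatFunc.X : RatFunc K) ^ z) := by
  rw [rderiv_mul, rderiv_C]
  have := X_mul_rderiv_zpow (K := K) z
  ring_nf
  ring_nf at this
  linear_combination RatFunc.C c * this

lemma ode_iff [CharZero K] (w d : ℤ) (hd : d ≠ 0) (φ : RatFunc K) (hφ : φ ≠ 0) :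
    (RatFunc.X * rderiv φ + ((w : RatFunc K) / (d : RatFunc K)) * φ = 0)
      ↔ ∃ k : ℤ, w = d * k ∧
          ∃ c : K, c ≠ 0 ∧ φ = RatFunc.C c * (RatFunc.X : RatFunc K) ^ (-k) := by
  have hd' : (d : RatFunc K) ≠ 0 := Int.cast_ne_zero.mpr hd
  constructor
  · intro h
    -- extract polynomial identity
    set a := φ.num with ha
    set b := φ.denom with hb
    have hb0 : b ≠ 0 := φ.denom_ne_zero
    have ha0 : a ≠ 0 := RatFunc.num_ne_zero hφ
    have hb' : algebraMap K[X] (RatFunc K) b ≠ 0 := RatFunc.algebraMap_ne_zero hb0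
    have hφeq : φ = algebraMap K[X] (RatFunc K) a / algebraMap K[X] (RatFunc K) b :=
      (RatFunc.num_div_denom φ).symm
    have Pb : ((d : K[X]) * Polynomial.X * (derivative a * b - a * derivative b)
        + (w : K[X]) * (a * b)) * b = 0 := by
      apply RatFunc.algebraMap_injective K
      simp only [map_add, map_mul, map_sub, map_intCast, RatFunc.algebraMap_X, map_zero]
      have hrd : rderiv φ = (algebraMap K[X] (RatFunc K) (derivative a)
          * algebraMap K[X] (RatFunc K) b
          - algebraMap K[X] (RatFunc K) a * algebraMap K[X] (RatFunc K) (derivative b))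
          / (algebraMap K[X] (RatFunc K) b) ^ 2 := rfl
      rw [hrd, hφeq] at h
      field_simp at h
      linear_combination (algebraMap K[X] (RatFunc K) b) * h
    have P : (d : K[X]) * Polynomial.X * (derivative a * b - a * derivative b)
        + (w : K[X]) * (a * b) = 0 := by
      rcases mul_eq_zero.mp Pb with h' | h'
      · exact h'
      · exact absurd h' hb0
    -- divisibilities
    have hcop : IsCoprime a b := RatFunc.isCoprime_num_denom φ
    have hu : IsUnit ((d : K[X])) := by
      have hC : ((d : ℤ) : K[X]) = Polynomial.C ((d : K)) :=
        (map_intCast (Polynomial.C : K →+* K[X]) d).symm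
      rw [hC]
      exact Polynomial.isUnit_C.mpr (isUnit_iff_ne_zero.mpr (by exact_mod_cast hd))
    have hbd : b ∣ Polynomial.X * derivative b := by
      have h1 : b ∣ ((d : K[X]) * (Polynomial.X * derivative b)) * a :=
        ⟨(d : K[X]) * Polynomial.X * derivative a + (w : K[X]) * a, by linear_combination -P⟩
      have h2 : b ∣ (d : K[X]) * (Polynomial.X * derivative b) :=
        (hcop.symm).dvd_of_dvd_mul_right h1
      exact (hu.dvd_mul_left).mp h2
    have had : a ∣ Polynomial.X * derivative a := by
      have h1 : a ∣ ((d : K[X]) * (Polynomial.X * derivative a)) * b :=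
        ⟨(d : K[X]) * Polynomial.X * derivative b - (w : K[X]) * b, by linear_combination P⟩
      have h2 : a ∣ (d : K[X]) * (Polynomial.X * derivative a) :=
        hcop.dvd_of_dvd_mul_right h1
      exact (hu.dvd_mul_left).mp h2
    obtain ⟨ca, α, hca, haeq⟩ := monomial_of_dvd a ha0 had
    obtain ⟨cb, β, hcb, hbeq⟩ := monomial_of_dvd b hb0 hbd
    have hCcb : (RatFunc.C cb : RatFunc K) ≠ 0 := by
      simpa using (RingHom.injective (RatFunc.C : K →+* RatFunc K)).ne_iff' (map_zero _) |>.mpr hcb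
    have hX : (RatFunc.X : RatFunc K) ≠ 0 := RatFunc.X_ne_zero
    have hmono : φ = RatFunc.C (ca * cb⁻¹) * (RatFunc.X : RatFunc K) ^ ((α : ℤ) - (β : ℤ)) := by
      rw [hφeq, haeq, hbeq, zpow_sub₀ hX, zpow_natCast, zpow_natCast]
      simp only [map_mul, map_pow, RatFunc.algebraMap_C, RatFunc.algebraMap_X,
        map_inv₀ (RatFunc.C : K →+* RatFunc K)]
      field_simp
    set z : ℤ := (α : ℤ) - (β : ℤ) with hz
    have hXr : RatFunc.X * rderiv φ = (z : RatFunc K) * φ := by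
      rw [hmono, X_mul_rderiv_CX]
    rw [hXr] at h
    have hfac : (z : RatFunc K) + (w : RatFunc K) / (d : RatFunc K) = 0 := by
      rcases mul_eq_zero.1 (show ((z : RatFunc K) + (w : RatFunc K) / (d : RatFunc K)) * φ = 0 by
        linear_combination h) with hh | hh
      · exact hh
      · exact absurd hh hφ
    have hw : (w : RatFunc K) = (d : RatFunc K) * ((-z : ℤ) : RatFunc K) := by
      field_simp at hfac
      push_cast
      linear_combination hfac
    have hwz : w = d * (-z) := by exact_mod_cast hw
    refine ⟨-z, hwz, ca * cb⁻¹, ?_, by rw [neg_neg]; exact hmono⟩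
    exact mul_ne_zero hca (inv_ne_zero hcb)
  · rintro ⟨k, rfl, c, hc, rfl⟩
    have hz := X_mul_rderiv_CX (K := K) c (-k)
    rw [hz]
    push_cast
    field_simp
    ring

lemma pairZ_add {n : ℕ} (m e v : Fin n → ℤ) : pairZ (m + e) v = pairZ m v + pairZ e v := by
  simp [pairZ, add_mul, Finset.sum_add_distrib]

lemma pairZ_zero {n : ℕ} (v : Fin n → ℤ) : pairZ 0 v = 0 := by simp [pairZ]

lemma pairZ_self_pos {n : ℕ} {ρ : Fin n → ℤ} (hρ : ρ ≠ 0) : 0 < pairZ ρ ρ := by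
  have h1 : ∃ i, ρ i ≠ 0 := by
    by_contra hc
    push_neg at hc
    exact hρ (funext fun i => hc i)
  obtain ⟨i, hi⟩ := h1
  have : ∀ j ∈ Finset.univ, 0 ≤ ρ j * ρ j := fun j _ => mul_self_nonneg _
  refine Finset.sum_pos' this ⟨i, Finset.mem_univ i, ?_⟩
  exact mul_self_pos.mpr hi

lemma Dvert_single {n : ℕ} (e ρ : Fin n → ℤ) (φ : RatFunc K) (m : Fin n → ℤ) (f : RatFunc K) :
    Dvert e ρ φ (Finsupp.single m f)
      = Finsupp.single (m + e) ((pairZ m ρ : RatFunc K) * φ * f) := by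
  rw [Dvert, Finsupp.sum_single_index (by simp)]

lemma Ehor_single {n : ℕ} (e' : Fin n → ℤ) (s d : ℤ) (u : Fin n → ℤ)
    (m : Fin n → ℤ) (f : RatFunc K) :
    Ehor e' s d u (Finsupp.single m f)
      = Finsupp.single (m + e')
          ((RatFunc.X : RatFunc K) ^ s
            * ((pairZ m u : RatFunc K) * f + (d : RatFunc K) * RatFunc.X * rderiv f)) := by
  rw [Ehor, Finsupp.sum_single_index (by simp [rderiv_zero])]

lemma Dvert_add {n : ℕ} (e ρ : Fin n → ℤ) (φ : RatFunc K)
    (b₁ b₂ : (Fin n → ℤ) →₀ RatFunc K) :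
    Dvert e ρ φ (b₁ + b₂) = Dvert e ρ φ b₁ + Dvert e ρ φ b₂ := by
  unfold Dvert
  rw [Finsupp.sum_add_index']
  · intro m; simp
  · intro m f₁ f₂; rw [mul_add, Finsupp.single_add]

lemma Ehor_add {n : ℕ} (e' : Fin n → ℤ) (s d : ℤ) (u : Fin n → ℤ)
    (b₁ b₂ : (Fin n → ℤ) →₀ RatFunc K) :
    Ehor e' s d u (b₁ + b₂) = Ehor e' s d u b₁ + Ehor e' s d u b₂ := by
  unfold Ehor
  rw [Finsupp.sum_add_index']
  · intro m; simp [rderiv_zero]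
  · intro m f₁ f₂
    rw [rderiv_add, ← Finsupp.single_add]
    congr 1
    ring

lemma Dvert_zero {n : ℕ} (e ρ : Fin n → ℤ) (φ : RatFunc K) :
    Dvert e ρ φ 0 = 0 := by simp [Dvert]

lemma Ehor_zero {n : ℕ} (e' : Fin n → ℤ) (s d : ℤ) (u : Fin n → ℤ) :
    Ehor (K := K) e' s d u 0 = 0 := by simp [Ehor]

lemma rderiv_X : rderiv (RatFunc.X : RatFunc K) = 1 := by
  rw [← RatFunc.algebraMap_X, rderiv_algebraMap]
  simp

end AuxLemmas

theorem vertical_horizontal_commute_iff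
    {K : Type*} [Field K] [IsAlgClosed K] [CharZero K] {n : ℕ} (hn : 1 ≤ n)
    (e ρ : Fin n → ℤ) (φ : RatFunc K) (e' : Fin n → ℤ) (s : ℤ) (d : ℤ)
    (hd : 0 < d) (u : Fin n → ℤ) (hφ : φ ≠ 0) (hρ : ρ ≠ 0) :
    ((∀ b : (Fin n → ℤ) →₀ RatFunc K,
        Dvert e ρ φ (Ehor e' s d u b) = Ehor e' s d u (Dvert e ρ φ b))
      ↔ pairZ e' ρ = 0 ∧
          RatFunc.X * rderiv φ
            + ((pairZ e u : RatFunc K) / (d : RatFunc K)) * φ = 0)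
    ∧ ((RatFunc.X * rderiv φ
          + ((pairZ e u : RatFunc K) / (d : RatFunc K)) * φ = 0)
        ↔ ∃ k : ℤ, pairZ e u = d * k ∧
            ∃ c : K, c ≠ 0 ∧ φ = RatFunc.C c * (RatFunc.X : RatFunc K) ^ (-k)) := by
  have hd0 : d ≠ 0 := hd.ne'
  have hd' : (d : RatFunc K) ≠ 0 := Int.cast_ne_zero.mpr hd0
  have hX : (RatFunc.X : RatFunc K) ≠ 0 := RatFunc.X_ne_zero
  have hXs : (RatFunc.X : RatFunc K) ^ s ≠ 0 := zpow_ne_zero s hX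
  refine ⟨?_, ode_iff (pairZ e u) d hd0 φ hφ⟩
  constructor
  · intro h
    -- value equation for a single
    have key : ∀ (m : Fin n → ℤ) (f : RatFunc K),
        (pairZ (m + e') ρ : RatFunc K) * φ
            * ((RatFunc.X : RatFunc K) ^ s
              * ((pairZ m u : RatFunc K) * f + (d : RatFunc K) * RatFunc.X * rderiv f))
          = (RatFunc.X : RatFunc K) ^ s
            * ((pairZ (m + e) u : RatFunc K) * ((pairZ m ρ : RatFunc K) * φ * f)
              + (d : RatFunc K) * RatFunc.X
                * rderiv ((pairZ m ρ : RatFunc K) * φ * f)) := by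
      intro m f
      have h1 := h (Finsupp.single m f)
      rw [Ehor_single, Dvert_single, Dvert_single, Ehor_single, add_right_comm m e' e] at h1
      exact Finsupp.single_injective _ h1
    have he'ρ : pairZ e' ρ = 0 := by
      have h1 := key 0 RatFunc.X
      simp only [pairZ_zero, Int.cast_zero, zero_mul, zero_add, rderiv_X, mul_one,
        pairZ_add, Int.cast_add, zero_mul, mul_zero, zero_add, add_zero] at h1
      have h2 : ((pairZ e' ρ : RatFunc K)) * (φ * ((RatFunc.X : RatFunc K) ^ s
          * ((d : RatFunc K) * RatFunc.X))) = 0 := by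
        rw [rderiv_zero] at h1
        linear_combination h1
      have h3 : (pairZ e' ρ : RatFunc K) = 0 := by
        rcases mul_eq_zero.1 h2 with hh | hh
        · exact hh
        · exact absurd hh (by
            apply mul_ne_zero hφ
            apply mul_ne_zero hXs
            exact mul_ne_zero hd' hX)
      exact_mod_cast h3
    refine ⟨he'ρ, ?_⟩
    have h1 := key ρ 1
    have hρρ : ((pairZ ρ ρ : ℤ) : RatFunc K) ≠ 0 :=
      Int.cast_ne_zero.mpr (pairZ_self_pos hρ).ne'
    rw [rderiv_one, mul_one, mul_one, pairZ_add, pairZ_add, he'ρ] at h1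
    rw [rderiv_mul, rderiv_intCast] at h1
    push_cast at h1
    -- cancel X^s and pairZ ρ ρ
    have h2 : (d : RatFunc K) * RatFunc.X * rderiv φ + (pairZ e u : RatFunc K) * φ = 0 := by
      have h3 : ((pairZ ρ ρ : ℤ) : RatFunc K) * ((RatFunc.X : RatFunc K) ^ s)
          * ((d : RatFunc K) * RatFunc.X * rderiv φ + (pairZ e u : RatFunc K) * φ) = 0 := by
        linear_combination -h1
      rcases mul_eq_zero.1 h3 with hh | hh
      · exact absurd hh (mul_ne_zero hρρ hXs)
      · exact hh
    field_simp
    linear_combination h2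
  · rintro ⟨h1, h2⟩
    have h2' : (d : RatFunc K) * RatFunc.X * rderiv φ + (pairZ e u : RatFunc K) * φ = 0 := by
      field_simp at h2
      linear_combination h2
    intro b
    induction b using Finsupp.induction with
    | zero => simp [Dvert_zero, Ehor_zero]
    | single_add m f rest hm hf ih =>
      rw [Ehor_add, Dvert_add, Dvert_add, Ehor_add, ih]
      congr 1
      rw [Ehor_single, Dvert_single, Dvert_single, Ehor_single, add_right_comm m e' e]
      congr 1
      rw [rderiv_mul, rderiv_mul, rderiv_intCast, pairZ_add, pairZ_add, h1]
      push_cast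
      linear_combination (-((RatFunc.X : RatFunc K) ^ s * (pairZ m ρ : RatFunc K) * f)) * h2'
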